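/- Let X be a real random variable with E[X²] < ∞ and let ν > 0. Then |E[X] − E[X/(1 + X²/ν)]| ≤ E[X²]/(2√ν). If moreover E[|X|³] < ∞, then also |E[X] − E[X/(1 + X²/ν)]| ≤ E[|X|³]/ν. -/

import Mathlib

open MeasureTheory

/-- Bias bound for the robust location estimand: if `E[X²] < ∞` then
`|E[X] − E[X/(1 + X²/ν)]| ≤ E[X²]/(2√ν)`, and if moreover `E[|X|³] < ∞` then
`|E[X] − E[X/(1 + X²/ν)]| ≤ E[|X|³]/ν`. -/
theorem robust_location_bias_bound {Ω : Type*} [MeasurableSpace Ω]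
    (P : Measure Ω) [IsProbabilityMeasure P]
    {X : Ω → ℝ} (hXmeas : Measurable X)
    (hX2 : Integrable (fun ω => (X ω) ^ 2) P) {ν : ℝ} (hν : 0 < ν) :
    |(∫ ω, X ω ∂P) - ∫ ω, X ω / (1 + (X ω) ^ 2 / ν) ∂P|
        ≤ (∫ ω, (X ω) ^ 2 ∂P) / (2 * Real.sqrt ν) ∧
    (Integrable (fun ω => |X ω| ^ 3) P →
      |(∫ ω, X ω ∂P) - ∫ ω, X ω / (1 + (X ω) ^ 2 / ν) ∂P|
        ≤ (∫ ω, |X ω| ^ 3 ∂P) / ν) := by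
  have hsν : 0 < Real.sqrt ν := Real.sqrt_pos.mpr hν
  have hden : ∀ z : ℝ, 0 < ν + z ^ 2 := fun z => by positivity
  have hb1 : ∀ z : ℝ, |z ^ 3 / (ν + z ^ 2)| ≤ z ^ 2 / (2 * Real.sqrt ν) := by
    intro z
    rw [abs_div, abs_of_pos (hden z), div_le_div_iff₀ (hden z) (by positivity)]
    have h3 : |z ^ 3| = z ^ 2 * |z| := by
      rw [abs_pow, pow_succ, sq_abs]
    rw [h3]
    nlinarith [sq_nonneg (Real.sqrt ν - |z|), Real.sq_sqrt hν.le, sq_nonneg z,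
      sq_abs z, abs_nonneg z]
  have hb2 : ∀ z : ℝ, |z ^ 3 / (ν + z ^ 2)| ≤ |z| ^ 3 / ν := by
    intro z
    rw [abs_div, abs_of_pos (hden z), abs_pow]
    gcongr
    · linarith [sq_nonneg z]
  -- the difference function
  set g : Ω → ℝ := fun ω => X ω ^ 3 / (ν + X ω ^ 2) with hg_def
  have hgmeas : Measurable g := by
    apply Measurable.div (hXmeas.pow_const 3)
    · exact measurable_const.add (hXmeas.pow_const 2)
  have hgint : Integrable g P := by
    refine Integrable.mono' (hX2.div_const (2 * Real.sqrt ν))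
      hgmeas.aestronglyMeasurable ?_
    exact Filter.Eventually.of_forall fun ω => hb1 (X ω)
  have hXint : Integrable X P := by
    refine Integrable.mono' ((hX2.add (integrable_const 1)).div_const 2)
      hXmeas.aestronglyMeasurable ?_
    refine Filter.Eventually.of_forall fun ω => ?_
    simp only [Pi.add_apply, Real.norm_eq_abs]
    nlinarith [sq_nonneg (|X ω| - 1), sq_abs (X ω), abs_nonneg (X ω)]
  have hpt : ∀ ω, X ω / (1 + X ω ^ 2 / ν) = X ω - g ω := by
    intro ω
    have h1 : (0:ℝ) < 1 + X ω ^ 2 / ν := by positivity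
    field_simp [hg_def]
    have hg : g ω * (ν + X ω ^ 2) = X ω ^ 3 := by
      show X ω ^ 3 / (ν + X ω ^ 2) * (ν + X ω ^ 2) = X ω ^ 3
      exact div_mul_cancel₀ _ (hden (X ω)).ne'
    linear_combination hg
  have hint : (∫ ω, X ω / (1 + X ω ^ 2 / ν) ∂P) = (∫ ω, X ω ∂P) - ∫ ω, g ω ∂P := by
    rw [show (fun ω => X ω / (1 + X ω ^ 2 / ν)) = fun ω => X ω - g ω from funext hpt] at *
    exact integral_sub hXint hgint
  have hkey : |(∫ ω, X ω ∂P) - ∫ ω, X ω / (1 + X ω ^ 2 / ν) ∂P| = |∫ ω, g ω ∂P| := by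
    rw [hint]; congr 1; ring
  have habs : |∫ ω, g ω ∂P| ≤ ∫ ω, |g ω| ∂P := by
    simpa [Real.norm_eq_abs] using norm_integral_le_integral_norm (μ := P) g
  have hgabsint : Integrable (fun ω => |g ω|) P := hgint.abs
  constructor
  · rw [hkey]
    refine habs.trans ?_
    calc ∫ ω, |g ω| ∂P ≤ ∫ ω, X ω ^ 2 / (2 * Real.sqrt ν) ∂P := by
          exact integral_mono hgabsint (hX2.div_const _) fun ω => hb1 (X ω)
      _ = (∫ ω, X ω ^ 2 ∂P) / (2 * Real.sqrt ν) := integral_div _ _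
  · intro hX3
    rw [hkey]
    refine habs.trans ?_
    calc ∫ ω, |g ω| ∂P ≤ ∫ ω, |X ω| ^ 3 / ν ∂P := by
          exact integral_mono hgabsint (hX3.div_const _) fun ω => hb2 (X ω)
      _ = (∫ ω, |X ω| ^ 3 ∂P) / ν := integral_div _ _
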